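/- Let A = ⊕_{i=0}^{2n} A^i be a graded commutative ℝ-algebra with zero differential satisfying the hard Lefschetz property with respect to ω ∈ A^2, and let (A ⊗ Λ(y), d) be the elementary extension with dy = ω. Then every defined higher-order Massey product ⟨a1, …, a_m⟩ with m ≥ 4 of cohomology classes a_i ∈ H^*(A ⊗ Λ(y), d) contains 0. -/

import Mathlib

/-- Product in the elementary extension `A ⊗ Λ(y)` of a graded algebra `A` with zero
differential (`deg y = 1`, `y² = 0`, `y·α = ε(α)·y`): a pair `(α, β)` stands for `α + β·y`
and `(α₁ + β₁y)(α₂ + β₂y) = α₁α₂ + (α₁β₂ + β₁ ε(α₂))y`, where `ε` is the parity involution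
`ε(α) = (-1)^{|α|} α`. -/
def emul {A : Type*} [Ring A] [Algebra ℝ A] (ε : A →ₗ[ℝ] A) (u v : A × A) : A × A :=
  (u.1 * v.1, u.1 * v.2 + u.2 * ε v.1)

/-- Differential of the elementary extension `(A ⊗ Λ(y), dy = ω)`: `d(α + β·y) = ε(β)·ω`. -/
def eD {A : Type*} [Ring A] [Algebra ℝ A] (ε : A →ₗ[ℝ] A) (ω : A) (u : A × A) : A × A :=
  (ε u.2 * ω, 0)

section Helpers

variable {A : Type*} [Ring A] [Algebra ℝ A]

lemma s2_pow_eq (a b : ℕ) (h : a % 2 = b % 2) : ((-1:ℝ))^a = (-1:ℝ)^b := by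
  rw [neg_one_pow_eq_pow_mod_two, h, ← neg_one_pow_eq_pow_mod_two]

lemma s2_pow_add (a b : ℕ) (h : (a + b) % 2 = 1) : ((-1:ℝ))^a + (-1:ℝ)^b = 0 := by
  have hb : b % 2 = (a+1) % 2 := by omega
  rw [s2_pow_eq b (a+1) hb, pow_succ]
  ring

lemma s2_emul_zero_right (ε : A →ₗ[ℝ] A) (x : A × A) : emul ε x 0 = 0 := by
  simp [emul]

lemma s2_emul_zero_left (ε : A →ₗ[ℝ] A) (y : A × A) : emul ε 0 y = 0 := by
  simp [emul]

lemma s2_emul_fst_zero (ε : A →ₗ[ℝ] A) (x y : A × A) (hx : x.1 = 0) (hy : y.1 = 0) :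
    emul ε x y = 0 := by
  simp [emul, hx, hy]

lemma s2_eD_zero (ε : A →ₗ[ℝ] A) (ω : A) : eD ε ω 0 = 0 := by
  simp [eD]

lemma s2_build (𝒜 : ℕ → Submodule ℝ A) (ε : A →ₗ[ℝ] A) (ω : A)
    (m : ℕ) (hm : 4 ≤ m) (D : ℕ → ℕ → ℕ) (γ : ℕ → ℕ → A × A) (u : ℕ → A)
    (hhom1 : ∀ i j, 1 ≤ i → i ≤ j → j ≤ m → (γ i j).1 ∈ 𝒜 (D i j))
    (hhom2 : ∀ i j, 1 ≤ i → i ≤ j → j ≤ m → (γ i j).2 ∈ 𝒜 (D i j - 1))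
    (hu : ∀ i, 1 ≤ i → i + 1 ≤ m → u i ∈ 𝒜 (D i (i+1) - 1))
    (hdiag : ∀ i, 1 ≤ i → i ≤ m → eD ε ω (γ i i) = 0)
    (hlen1 : ∀ i, 1 ≤ i → i + 1 ≤ m →
      eD ε ω (γ i (i+1)) = ((-1:ℝ) ^ (D i i)) • emul ε (γ i i) (γ (i+1) (i+1)))
    (hA : ∀ i, 1 ≤ i → i + 1 ≤ m → ε (u i) * ω = ε ((γ i (i+1)).2) * ω)
    (hstar : ∀ i, 1 ≤ i → i + 2 ≤ m →
      ((-1:ℝ) ^ (D i i)) • ((γ i i).1 * u (i+1)) +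
        ((-1:ℝ) ^ (D i (i+1))) • (u i * ε ((γ (i+2) (i+2)).1)) = 0) :
    ∃ γ' : ℕ → ℕ → A × A,
      (∀ i j, 1 ≤ i → i ≤ j → j ≤ m → (γ' i j).1 ∈ 𝒜 (D i j)) ∧
      (∀ i j, 1 ≤ i → i ≤ j → j ≤ m → (γ' i j).2 ∈ 𝒜 (D i j - 1)) ∧
      (∀ i, 1 ≤ i → i ≤ m → ∃ v : A × A, γ' i i - γ i i = eD ε ω v) ∧
      (∀ i j, 1 ≤ i → i ≤ j → j ≤ m → (i, j) ≠ (1, m) →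
        eD ε ω (γ' i j) =
          ∑ k ∈ Finset.Ico i j, ((-1 : ℝ) ^ (D i k)) • emul ε (γ' i k) (γ' (k + 1) j)) ∧
      ∃ w : A × A,
        ∑ k ∈ Finset.Ico 1 m, ((-1 : ℝ) ^ (D 1 k)) • emul ε (γ' 1 k) (γ' (k + 1) m) =
          eD ε ω w := by
  classical
  set γ' : ℕ → ℕ → A × A := fun i j =>
    if i = j then γ i i else if j = i + 1 then ((0 : A), u i) else 0 with hγ'def
  have hdiagv : ∀ i, γ' i i = γ i i := by
    intro i; simp [hγ'def]
  have hsucc : ∀ i, γ' i (i+1) = ((0:A), u i) := by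
    intro i; simp [hγ'def]
  have hfar : ∀ i j, i ≠ j → j ≠ i + 1 → γ' i j = 0 := by
    intro i j h1 h2; simp only [hγ'def]; rw [if_neg h1, if_neg h2]
  have hoff : ∀ i j, i ≠ j → (γ' i j).1 = 0 := by
    intro i j h1
    by_cases h2 : j = i+1
    · subst h2; rw [hsucc]
    · rw [hfar i j h1 h2]; rfl
  refine ⟨γ', ?_, ?_, ?_, ?_, ?_⟩
  · -- homogeneity of first components
    intro i j h1 h2 h3
    by_cases heq : i = j
    · subst heq; rw [hdiagv]; exact hhom1 i i h1 le_rfl h3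
    · by_cases hs : j = i + 1
      · subst hs; rw [hsucc]; exact Submodule.zero_mem _
      · rw [hfar i j heq hs]; exact Submodule.zero_mem _
  · -- homogeneity of second components
    intro i j h1 h2 h3
    by_cases heq : i = j
    · subst heq; rw [hdiagv]; exact hhom2 i i h1 le_rfl h3
    · by_cases hs : j = i + 1
      · subst hs; rw [hsucc]; exact hu i h1 h3
      · rw [hfar i j heq hs]; exact Submodule.zero_mem _
  · -- same classes
    intro i h1 h2
    exact ⟨0, by rw [hdiagv, sub_self, s2_eD_zero]⟩
  · -- defining system
    intro i j h1 h2 h3 hne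
    by_cases hji : j = i
    · subst hji
      rw [Finset.Ico_self, Finset.sum_empty, hdiagv]
      exact hdiag j h1 h3
    · by_cases hj1 : j = i + 1
      · subst hj1
        rw [Nat.Ico_succ_singleton, Finset.sum_singleton, hsucc, hdiagv, hdiagv,
          ← hlen1 i h1 h3]
        exact Prod.ext_iff.mpr ⟨hA i h1 h3, rfl⟩
      · by_cases hj2 : j = i + 2
        · subst hj2
          rw [hfar i (i+2) (by omega) (by omega), s2_eD_zero]
          rw [show Finset.Ico i (i+2) = {i, i+1} from by
            ext x; simp [Finset.mem_Ico, Finset.mem_insert, Finset.mem_singleton]; omega]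
          rw [Finset.sum_insert (by simp only [Finset.mem_singleton]; omega),
            Finset.sum_singleton, hdiagv, hsucc, hsucc, hdiagv]
          have e1 : emul ε (γ i i) ((0:A), u (i+1)) = ((0:A), (γ i i).1 * u (i+1)) := by
            simp [emul]
          have e2 : emul ε ((0:A), u i) (γ (i+2) (i+2)) =
              ((0:A), u i * ε ((γ (i+2) (i+2)).1)) := by
            simp [emul]
          rw [e1, e2]
          symm
          rw [Prod.smul_mk, Prod.smul_mk, Prod.mk_add_mk, Prod.mk_eq_zero]
          exact ⟨by simp, hstar i h1 h3⟩
        · have h5 : i + 3 ≤ j := by omega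
          rw [hfar i j (by omega) (by omega), s2_eD_zero]
          symm
          apply Finset.sum_eq_zero
          intro k hk
          rw [Finset.mem_Ico] at hk
          rcases eq_or_ne k i with rfl | hki
          · rw [hfar (k+1) j (by omega) (by omega), s2_emul_zero_right, smul_zero]
          · rcases eq_or_ne (k+1) j with hkj | hkj
            · rw [hfar i k (by omega) (by omega), s2_emul_zero_left, smul_zero]
            · rw [s2_emul_fst_zero ε _ _ (hoff i k (by omega)) (hoff (k+1) j (by omega)),
                smul_zero]
  · -- Massey cocycle vanishes
    refine ⟨0, ?_⟩
    rw [s2_eD_zero]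
    apply Finset.sum_eq_zero
    intro k hk
    rw [Finset.mem_Ico] at hk
    rcases eq_or_ne k 1 with rfl | hk1
    · rw [hfar 2 m (by omega) (by omega), s2_emul_zero_right, smul_zero]
    · rcases eq_or_ne (k+1) m with hkm | hkm
      · rw [hfar 1 k (by omega) (by omega), s2_emul_zero_left, smul_zero]
      · rw [s2_emul_fst_zero ε _ _ (hoff 1 k (by omega)) (hoff (k+1) m (by omega)),
          smul_zero]

end Helpers

/-- Let `A = ⊕_{i=0}^{2n} Aⁱ` be a graded-commutative ℝ-algebra with zero
differential satisfying the hard Lefschetz property with respect to `ω ∈ A²`, and let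
`(A ⊗ Λ(y), dy = ω)` be the elementary extension.  Then every defined higher-order Massey
product `⟨a₁, …, a_m⟩` with `m ≥ 4` of cohomology classes of `(A ⊗ Λ(y), d)` contains `0`:
given any defining system `γ` (with homogeneous entries `γ_{ij}` of the appropriate degrees
`D i j = Σ_{k=i}^{j} p_k - (j-i)`) there is a defining system `γ'` for the same classes whose
associated cocycle `Σ_{k=1}^{m-1} (-1)^{|γ'_{1k}|} γ'_{1k}·γ'_{k+1,m}` is exact. -/
theorem statement2 {A : Type*} [Ring A] [Algebra ℝ A] (𝒜 : ℕ → Submodule ℝ A)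
    [GradedAlgebra 𝒜] (n : ℕ) (ω : A) (hω : ω ∈ 𝒜 2)
    (hbound : ∀ i, 2 * n < i → 𝒜 i = ⊥)
    (hcomm : ∀ i j, ∀ u ∈ 𝒜 i, ∀ v ∈ 𝒜 j, u * v = ((-1 : ℝ) ^ (i * j)) • (v * u))
    (hLef : ∀ k ≤ n, ∀ z ∈ 𝒜 (n + k), ∃! β, β ∈ 𝒜 (n - k) ∧ β * ω ^ k = z)
    (ε : A →ₗ[ℝ] A) (hε : ∀ i, ∀ v ∈ 𝒜 i, ε v = ((-1 : ℝ) ^ i) • v)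
    (m : ℕ) (hm : 4 ≤ m) (p : ℕ → ℕ) (hp : ∀ i, 0 < p i)
    (D : ℕ → ℕ → ℕ) (hD : ∀ i j, D i j = (∑ k ∈ Finset.Icc i j, p k) - (j - i))
    (γ : ℕ → ℕ → A × A)
    (hhom1 : ∀ i j, 1 ≤ i → i ≤ j → j ≤ m → (γ i j).1 ∈ 𝒜 (D i j))
    (hhom2 : ∀ i j, 1 ≤ i → i ≤ j → j ≤ m → (γ i j).2 ∈ 𝒜 (D i j - 1))
    (hsys : ∀ i j, 1 ≤ i → i ≤ j → j ≤ m → (i, j) ≠ (1, m) →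
      eD ε ω (γ i j) =
        ∑ k ∈ Finset.Ico i j, ((-1 : ℝ) ^ (D i k)) • emul ε (γ i k) (γ (k + 1) j)) :
    ∃ γ' : ℕ → ℕ → A × A,
      (∀ i j, 1 ≤ i → i ≤ j → j ≤ m → (γ' i j).1 ∈ 𝒜 (D i j)) ∧
      (∀ i j, 1 ≤ i → i ≤ j → j ≤ m → (γ' i j).2 ∈ 𝒜 (D i j - 1)) ∧
      -- `γ'` is a defining system for the same cohomology classes:
      (∀ i, 1 ≤ i → i ≤ m → ∃ v : A × A, γ' i i - γ i i = eD ε ω v) ∧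
      (∀ i j, 1 ≤ i → i ≤ j → j ≤ m → (i, j) ≠ (1, m) →
        eD ε ω (γ' i j) =
          ∑ k ∈ Finset.Ico i j, ((-1 : ℝ) ^ (D i k)) • emul ε (γ' i k) (γ' (k + 1) j)) ∧
      -- and its associated Massey cocycle is exact:
      ∃ w : A × A,
        ∑ k ∈ Finset.Ico 1 m, ((-1 : ℝ) ^ (D 1 k)) • emul ε (γ' 1 k) (γ' (k + 1) m) =
          eD ε ω w := by
  classical
  have hp1 : ∀ i, 1 ≤ p i := hp
  have hDii : ∀ i, D i i = p i := by
    intro i; rw [hD]; simp [Finset.Icc_self]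
  have hIccsucc : ∀ i : ℕ, (∑ k ∈ Finset.Icc i (i+1), p k) = p i + p (i+1) := by
    intro i
    rw [Finset.sum_Icc_succ_top (Nat.le_succ i), Finset.Icc_self, Finset.sum_singleton]
  have hDis : ∀ i, D i (i+1) = p i + p (i+1) - 1 := by
    intro i; rw [hD, hIccsucc]; omega
  have hωc : ∀ (q : ℕ) (x : A), x ∈ 𝒜 q → ω * x = x * ω := by
    intro q x hx
    rw [hcomm 2 q ω hω x hx, pow_mul, neg_one_sq, one_pow, one_smul]
  have hdiag0 : ∀ i, 1 ≤ i → i ≤ m → eD ε ω (γ i i) = 0 := by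
    intro i hi1 hi2
    have h := hsys i i hi1 le_rfl hi2 (by
      intro hcon; rw [Prod.mk.injEq] at hcon; omega)
    rwa [Finset.Ico_self, Finset.sum_empty] at h
  have hβω : ∀ i, 1 ≤ i → i ≤ m → ((γ i i).2) * ω = 0 := by
    intro i hi1 hi2
    have h0 := hdiag0 i hi1 hi2
    have h1 : ε ((γ i i).2) * ω = 0 := congrArg Prod.fst h0
    have h2 : (γ i i).2 ∈ 𝒜 (D i i - 1) := hhom2 i i hi1 le_rfl hi2
    rw [hε _ _ h2, smul_mul_assoc] at h1
    have h3 : ((-1:ℝ)^(D i i - 1)) ≠ 0 := by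
      apply pow_ne_zero; norm_num
    exact (smul_eq_zero.mp h1).resolve_left h3
  have hlen1 : ∀ i, 1 ≤ i → i + 1 ≤ m →
      eD ε ω (γ i (i+1)) = ((-1:ℝ)^(D i i)) • emul ε (γ i i) (γ (i+1) (i+1)) := by
    intro i hi1 hi2
    have h := hsys i (i+1) hi1 (Nat.le_succ i) hi2 (by
      intro hcon; rw [Prod.mk.injEq] at hcon; omega)
    rwa [Nat.Ico_succ_singleton, Finset.sum_singleton] at h
  have hfirst : ∀ i, 1 ≤ i → i + 1 ≤ m →
      ε ((γ i (i+1)).2) * ω = ((-1:ℝ)^(D i i)) • ((γ i i).1 * ((γ (i+1) (i+1)).1)) := by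
    intro i hi1 hi2
    have h := congrArg Prod.fst (hlen1 i hi1 hi2)
    simpa [eD, emul] using h
  have hbω : ∀ i, 1 ≤ i → i + 1 ≤ m →
      ((γ i (i+1)).2) * ω =
        ((-1:ℝ)^((D i (i+1) - 1) + D i i)) • ((γ i i).1 * ((γ (i+1) (i+1)).1)) := by
    intro i hi1 hi2
    have h2 : (γ i (i+1)).2 ∈ 𝒜 (D i (i+1) - 1) := hhom2 i (i+1) hi1 (Nat.le_succ i) hi2
    have h1 := hfirst i hi1 hi2
    rw [hε _ _ h2, smul_mul_assoc] at h1
    calc (γ i (i+1)).2 * ω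
        = ((-1:ℝ)^((D i (i+1) - 1) + (D i (i+1) - 1))) • ((γ i (i+1)).2 * ω) := by
          rw [s2_pow_eq _ 0 (by omega), pow_zero, one_smul]
      _ = ((-1:ℝ)^(D i (i+1) - 1)) • (((-1:ℝ)^(D i (i+1) - 1)) • ((γ i (i+1)).2 * ω)) := by
          rw [smul_smul, ← pow_add]
      _ = ((-1:ℝ)^(D i (i+1) - 1)) • (((-1:ℝ)^(D i i)) • ((γ i i).1 * ((γ (i+1) (i+1)).1))) := by
          rw [h1]
      _ = ((-1:ℝ)^((D i (i+1) - 1) + D i i)) • ((γ i i).1 * ((γ (i+1) (i+1)).1)) := by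
          rw [smul_smul, ← pow_add]
  have hsnd2 : ∀ i, 1 ≤ i → i + 2 ≤ m →
      (0:A) = ((-1:ℝ)^(D i i)) • ((γ i i).1 * (γ (i+1) (i+2)).2 + (γ i i).2 * ε ((γ (i+1) (i+2)).1))
        + ((-1:ℝ)^(D i (i+1))) • ((γ i (i+1)).1 * (γ (i+2) (i+2)).2 + (γ i (i+1)).2 * ε ((γ (i+2) (i+2)).1)) := by
    intro i hi1 hi2
    have h := hsys i (i+2) hi1 (by omega) hi2 (by
      intro hcon; rw [Prod.mk.injEq] at hcon; omega)
    rw [show Finset.Ico i (i+2) = {i, i+1} from by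
        ext x; simp [Finset.mem_Ico, Finset.mem_insert, Finset.mem_singleton]; omega,
      Finset.sum_insert (by simp only [Finset.mem_singleton]; omega),
      Finset.sum_singleton] at h
    have h2 := congrArg Prod.snd h
    simpa [eD, emul] using h2
  by_cases hall : ∀ i, 1 ≤ i → i ≤ m → (γ i i).2 = 0
  · -- Case A : no heavy diagonal entries
    refine s2_build 𝒜 ε ω m hm D γ (fun i => (γ i (i+1)).2) hhom1 hhom2
      (fun i hi1 hi2 => hhom2 i (i+1) hi1 (Nat.le_succ i) hi2) hdiag0 hlen1
      (fun i _ _ => rfl) ?_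
    intro i hi1 hi2
    have h := hsnd2 i hi1 hi2
    rw [hall i hi1 (by omega), hall (i+2) (by omega) hi2] at h
    simpa [zero_mul, mul_zero, add_zero, zero_add] using h.symm
  · push_neg at hall
    obtain ⟨h, hh1, hh2, hhne⟩ := hall
    -- any heavy index t has p t ≥ n+1
    have key : ∀ t, 1 ≤ t → t ≤ m → (γ t t).2 ≠ 0 → n + 1 ≤ p t := by
      intro t ht1 ht2 htβ
      by_contra hle
      push_neg at hle
      obtain ⟨β₀, ⟨hb1, hb2⟩, huniq⟩ := hLef (n - (p t - 1)) (by omega) 0 (Submodule.zero_mem _)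
      have e1 : (γ t t).2 = β₀ := by
        apply huniq
        constructor
        · have hmem := hhom2 t t ht1 le_rfl ht2
          rw [hDii] at hmem
          rw [show n - (n - (p t - 1)) = p t - 1 from by have := hp1 t; omega]
          exact hmem
        · rw [show n - (p t - 1) = (n - (p t - 1) - 1) + 1 from by have := hp1 t; omega,
            pow_succ', ← mul_assoc, hβω t ht1 ht2, zero_mul]
      have e2 : (0:A) = β₀ := huniq 0 ⟨Submodule.zero_mem _, by rw [zero_mul]⟩
      exact htβ (e1.trans e2.symm)
    have hph := key h hh1 hh2 hhne
    have hs1 : ∀ a b : ℕ, a ≤ b → b - a + 1 ≤ ∑ t ∈ Finset.Icc a b, p t := by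
      intro a b hab
      calc b - a + 1 = (Finset.Icc a b).card := by rw [Nat.card_Icc]; omega
        _ = ∑ t ∈ Finset.Icc a b, 1 := by rw [Finset.sum_const, smul_eq_mul, mul_one]
        _ ≤ _ := Finset.sum_le_sum (fun t _ => hp1 t)
    have hDpos : ∀ a b : ℕ, a ≤ b → 1 ≤ D a b := by
      intro a b hab
      have hb := hs1 a b hab
      rw [hD]
      omega
    have hDsplit : ∀ k, 1 ≤ k → k < m → D 1 k + D (k+1) m = D 1 m + 1 := by
      intro k hk1 hkm
      have hsplit : (∑ t ∈ Finset.Icc 1 k, p t) + (∑ t ∈ Finset.Icc (k+1) m, p t)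
          = ∑ t ∈ Finset.Icc 1 m, p t := by
        rw [← Finset.Ico_add_one_right_eq_Icc, ← Finset.Ico_add_one_right_eq_Icc, ← Finset.Ico_add_one_right_eq_Icc]
        exact Finset.sum_Ico_consecutive _ (by omega) (by omega)
      have b1 := hs1 1 k hk1
      have b2 := hs1 (k+1) m (by omega)
      rw [hD 1 k, hD (k+1) m, hD 1 m]
      omega
    by_cases hsec : ∃ j, (1 ≤ j ∧ j ≤ m ∧ j ≠ h) ∧ (γ j j).2 ≠ 0
    · -- Case B : two heavy indices, everything is zero by degree reasons
      obtain ⟨j₂, ⟨hj1, hj2, hjne⟩, hjβ⟩ := hsec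
      have hpj := key j₂ hj1 hj2 hjβ
      have hsums : m + 2*n ≤ ∑ k ∈ Finset.Icc 1 m, p k := by
        have hle : ∀ k ∈ Finset.Icc 1 m,
            (1 + (if k = h then n else 0) + (if k = j₂ then n else 0)) ≤ p k := by
          intro k _
          by_cases e1 : k = h
          · subst e1
            rw [if_pos rfl, if_neg (by omega)]
            omega
          · by_cases e2 : k = j₂
            · subst e2
              rw [if_neg e1, if_pos rfl]
              omega
            · rw [if_neg e1, if_neg e2]
              have := hp1 k; omega
        calc m + 2*n
            = ∑ k ∈ Finset.Icc 1 m, (1 + (if k = h then n else 0) + (if k = j₂ then n else 0)) := by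
              rw [Finset.sum_add_distrib, Finset.sum_add_distrib, Finset.sum_const,
                Finset.sum_ite_eq' (Finset.Icc 1 m) h (fun _ => n),
                Finset.sum_ite_eq' (Finset.Icc 1 m) j₂ (fun _ => n),
                if_pos (by rw [Finset.mem_Icc]; omega), if_pos (by rw [Finset.mem_Icc]; omega)]
              rw [Nat.card_Icc, smul_eq_mul, mul_one]
              omega
          _ ≤ _ := Finset.sum_le_sum hle
      have hD1m : 2*n + 1 ≤ D 1 m := by
        rw [hD]
        omega
      refine ⟨γ, hhom1, hhom2, fun i h1 h2 => ⟨0, by rw [sub_self, s2_eD_zero]⟩, hsys, 0, ?_⟩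
      rw [s2_eD_zero]
      apply Finset.sum_eq_zero
      intro k hk
      rw [Finset.mem_Ico] at hk
      have hdd := hDsplit k hk.1 hk.2
      have hterm : emul ε (γ 1 k) (γ (k+1) m) = 0 := by
        have m1 : (γ 1 k).1 ∈ 𝒜 (D 1 k) := hhom1 1 k le_rfl hk.1 (by omega)
        have m2 : (γ (k+1) m).1 ∈ 𝒜 (D (k+1) m) := hhom1 (k+1) m (by omega) (by omega) le_rfl
        have m3 : (γ 1 k).2 ∈ 𝒜 (D 1 k - 1) := hhom2 1 k le_rfl hk.1 (by omega)
        have m4 : (γ (k+1) m).2 ∈ 𝒜 (D (k+1) m - 1) := hhom2 (k+1) m (by omega) (by omega) le_rfl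
        have p1 : 1 ≤ D 1 k := hDpos 1 k hk.1
        have p2 : 1 ≤ D (k+1) m := hDpos (k+1) m (by omega)
        have z1 : (γ 1 k).1 * (γ (k+1) m).1 = 0 := by
          have hz := SetLike.mul_mem_graded m1 m2
          rw [hbound (D 1 k + D (k+1) m) (by omega)] at hz
          simpa using hz
        have z2 : (γ 1 k).1 * (γ (k+1) m).2 = 0 := by
          have hz := SetLike.mul_mem_graded m1 m4
          rw [hbound (D 1 k + (D (k+1) m - 1)) (by omega)] at hz
          simpa using hz
        have z3 : (γ 1 k).2 * ε ((γ (k+1) m).1) = 0 := by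
          have hε1 : ε ((γ (k+1) m).1) ∈ 𝒜 (D (k+1) m) := by
            rw [hε _ _ m2]
            exact Submodule.smul_mem _ _ m2
          have hz := SetLike.mul_mem_graded m3 hε1
          rw [hbound ((D 1 k - 1) + D (k+1) m) (by omega)] at hz
          simpa using hz
        rw [show (0 : A × A) = ((0:A), (0:A)) from rfl]
        rw [emul, z1, z2, z3, add_zero]
      rw [hterm, smul_zero]
    · -- Case C : exactly one heavy index h
      push_neg at hsec
      have huniq : ∀ j, 1 ≤ j → j ≤ m → j ≠ h → (γ j j).2 = 0 := by
        intro j h1 h2 h3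
        exact hsec j ⟨h1, h2, h3⟩
      obtain ⟨ξ, hξm, hξω, hξ0⟩ :
          ∃ ξ, ξ ∈ 𝒜 (p h - 2) ∧ ξ * ω = (γ h h).1 ∧ (p h ≤ 1 → ξ = 0) := by
        by_cases hb2n : p h ≤ 2*n
        · have hmemh : (γ h h).1 ∈ 𝒜 (n + (p h - n)) := by
            have hmem := hhom1 h h hh1 le_rfl hh2
            rw [hDii] at hmem
            rw [show n + (p h - n) = p h from by omega]
            exact hmem
          obtain ⟨β₀, ⟨hm₀, he₀⟩, _⟩ := hLef (p h - n) (by omega) ((γ h h).1) hmemh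
          refine ⟨β₀ * ω ^ (p h - n - 1), ?_, ?_, ?_⟩
          · have hpow : ω ^ (p h - n - 1) ∈ 𝒜 ((p h - n - 1) • 2) :=
              SetLike.pow_mem_graded _ hω
            have hmul := SetLike.mul_mem_graded hm₀ hpow
            rw [show (n - (p h - n)) + (p h - n - 1) • 2 = p h - 2 from by
              simp only [smul_eq_mul]; omega] at hmul
            exact hmul
          · rw [mul_assoc, ← pow_succ,
              show p h - n - 1 + 1 = p h - n from by omega]
            exact he₀
          · intro hle
            exact absurd hle (by omega)
        · have hz : (γ h h).1 = 0 := by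
            have hmem := hhom1 h h hh1 le_rfl hh2
            rw [hDii, hbound (p h) (by omega)] at hmem
            simpa using hmem
          exact ⟨0, Submodule.zero_mem _, by rw [zero_mul, hz], fun _ => rfl⟩
      have hωξ : ω * ξ = (γ h h).1 := by rw [hωc _ _ hξm, hξω]
      set u : ℕ → A := fun i =>
        if i + 1 = h then ((-1:ℝ)^(p h)) • ((γ i i).1 * ξ)
        else if i = h then ((-1:ℝ)^(p (i+1))) • (ξ * ((γ (i+1) (i+1)).1))
        else (γ i (i+1)).2 with hu_def
      refine s2_build 𝒜 ε ω m hm D γ u hhom1 hhom2 ?_ hdiag0 hlen1 ?_ ?_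
      · -- membership of u
        intro i hi1 hi2
        by_cases c1 : i + 1 = h
        · simp only [hu_def]
          rw [if_pos c1]
          by_cases hp2 : 2 ≤ p h
          · apply Submodule.smul_mem
            have hmem : (γ i i).1 ∈ 𝒜 (p i) := by
              have := hhom1 i i hi1 le_rfl (by omega)
              rwa [hDii] at this
            have hmul := SetLike.mul_mem_graded hmem hξm
            have hpa : p (i+1) = p h := by rw [c1]
            rw [show p i + (p h - 2) = D i (i+1) - 1 from by rw [hDis]; omega] at hmul
            exact hmul
          · rw [hξ0 (by omega), mul_zero, smul_zero]
            exact Submodule.zero_mem _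
        · by_cases c2 : i = h
          · simp only [hu_def]
            rw [if_neg c1, if_pos c2]
            by_cases hp2 : 2 ≤ p h
            · apply Submodule.smul_mem
              have hmem : (γ (i+1) (i+1)).1 ∈ 𝒜 (p (i+1)) := by
                have := hhom1 (i+1) (i+1) (by omega) le_rfl hi2
                rwa [hDii] at this
              have hmul := SetLike.mul_mem_graded hξm hmem
              have hpa : p i = p h := by rw [c2]
              rw [show (p h - 2) + p (i+1) = D i (i+1) - 1 from by rw [hDis]; omega] at hmul
              exact hmul
            · rw [hξ0 (by omega), zero_mul, smul_zero]
              exact Submodule.zero_mem _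
          · simp only [hu_def]
            rw [if_neg c1, if_neg c2]
            exact hhom2 i (i+1) hi1 (Nat.le_succ i) hi2
      · -- hA : the modified entries have the same differential
        intro i hi1 hi2
        by_cases c1 : i + 1 = h
        · simp only [hu_def]
          rw [if_pos c1]
          have hpa : p (i+1) = p h := by rw [c1]
          by_cases hp2 : 2 ≤ p h
          · have hmem : (γ i i).1 ∈ 𝒜 (p i) := by
              have := hhom1 i i hi1 le_rfl (by omega)
              rwa [hDii] at this
            have hmul : (γ i i).1 * ξ ∈ 𝒜 (p i + (p h - 2)) := SetLike.mul_mem_graded hmem hξm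
            rw [map_smul, hε _ _ hmul, smul_smul, ← pow_add, smul_mul_assoc, mul_assoc, hξω,
              hfirst i hi1 hi2, hDii, c1]
            rw [s2_pow_eq (p h + (p i + (p h - 2))) (p i) (by omega)]
          · rw [hξ0 (by omega), mul_zero, smul_zero, map_zero, zero_mul,
              hfirst i hi1 hi2]
            have hz : (γ (i+1) (i+1)).1 = 0 := by
              rw [c1, ← hξω, hξ0 (by omega), zero_mul]
            rw [hz, mul_zero, smul_zero]
        · by_cases c2 : i = h
          · simp only [hu_def]
            rw [if_neg c1, if_pos c2]
            by_cases hp2 : 2 ≤ p h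
            · have hmem : (γ (i+1) (i+1)).1 ∈ 𝒜 (p (i+1)) := by
                have := hhom1 (i+1) (i+1) (by omega) le_rfl hi2
                rwa [hDii] at this
              have hmul : ξ * (γ (i+1) (i+1)).1 ∈ 𝒜 ((p h - 2) + p (i+1)) :=
                SetLike.mul_mem_graded hξm hmem
              have hpa : p i = p h := by rw [c2]
              rw [map_smul, hε _ _ hmul, smul_smul, ← pow_add, smul_mul_assoc, mul_assoc,
                ← hωc _ _ hmem, ← mul_assoc, hξω, ← c2, hfirst i hi1 hi2, hDii]
              rw [s2_pow_eq (p (i+1) + (p i - 2 + p (i+1))) (p i) (by omega)]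
            · rw [hξ0 (by omega), zero_mul, smul_zero, map_zero, zero_mul,
                hfirst i hi1 hi2]
              have hz : (γ i i).1 = 0 := by
                rw [c2, ← hξω, hξ0 (by omega), zero_mul]
              rw [hz, zero_mul, smul_zero]
          · simp only [hu_def]
            rw [if_neg c1, if_neg c2]
      · -- hstar
        intro i hi1 hi2
        have hmem2 : (γ (i+2) (i+2)).1 ∈ 𝒜 (p (i+2)) := by
          have := hhom1 (i+2) (i+2) (by omega) le_rfl hi2
          rwa [hDii] at this
        have hεa2 : ε ((γ (i+2) (i+2)).1) = ((-1:ℝ)^(p (i+2))) • ((γ (i+2) (i+2)).1) :=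
          hε _ _ hmem2
        by_cases c1 : i + 1 = h
        · -- both u i and u (i+1) are modified
          have e_ui : u i = ((-1:ℝ)^(p h)) • ((γ i i).1 * ξ) := by
            simp only [hu_def]; rw [if_pos c1]
          have e_ui1 : u (i+1) = ((-1:ℝ)^(p (i+2))) • (ξ * ((γ (i+2) (i+2)).1)) := by
            simp only [hu_def]; rw [if_neg (by omega), if_pos c1]
          have hpa : p (i+1) = p h := by rw [c1]
          have T1 : (γ i i).1 * u (i+1) =
              ((-1:ℝ)^(p (i+2))) • ((γ i i).1 * (ξ * ((γ (i+2) (i+2)).1))) := by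
            rw [e_ui1, mul_smul_comm]
          have T2 : u i * ε ((γ (i+2) (i+2)).1) =
              ((-1:ℝ)^(p h + p (i+2))) • ((γ i i).1 * (ξ * ((γ (i+2) (i+2)).1))) := by
            rw [e_ui, hεa2, smul_mul_assoc, mul_smul_comm, smul_smul, ← pow_add, mul_assoc]
          rw [T1, T2, smul_smul, smul_smul, ← pow_add, ← pow_add, ← add_smul,
            s2_pow_add _ _ (by
              have d1 := hDii i; have d2 := hDis i
              have := hp1 i; have := hp1 (i+1); have := hp1 (i+2)
              omega), zero_smul]
        · by_cases c2 : i = h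
          · -- u i modified (second branch), u (i+1) default
            have e_ui : u i = ((-1:ℝ)^(p (i+1))) • (ξ * ((γ (i+1) (i+1)).1)) := by
              simp only [hu_def]; rw [if_neg c1, if_pos c2]
            have e_ui1 : u (i+1) = (γ (i+1) (i+2)).2 := by
              simp only [hu_def]
              rw [if_neg (by omega), if_neg (by omega)]
            have ha : (γ i i).1 = ξ * ω := by rw [c2]; exact hξω.symm
            have hbm : (γ (i+1) (i+2)).2 ∈ 𝒜 (D (i+1) (i+2) - 1) :=
              hhom2 (i+1) (i+2) (by omega) (by omega) hi2
            have hb := hbω (i+1) (by omega) hi2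
            have T1 : (γ i i).1 * u (i+1) =
                ((-1:ℝ)^(D (i+1) (i+1+1) - 1 + D (i+1) (i+1))) •
                  (ξ * ((γ (i+1) (i+1)).1 * ((γ (i+1+1) (i+1+1)).1))) := by
              rw [e_ui1, ha, mul_assoc, hωc _ _ hbm, hb, mul_smul_comm]
            have T2 : u i * ε ((γ (i+2) (i+2)).1) =
                ((-1:ℝ)^(p (i+1) + p (i+2))) •
                  (ξ * ((γ (i+1) (i+1)).1 * ((γ (i+1+1) (i+1+1)).1))) := by
              rw [e_ui, hεa2, smul_mul_assoc, mul_smul_comm, smul_smul, ← pow_add, mul_assoc]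
            rw [T1, T2, smul_smul, smul_smul, ← pow_add, ← pow_add, ← add_smul,
              s2_pow_add _ _ (by
                have d1 := hDii i; have d2 := hDis i
                have d3 : D (i+1) (i+1) = p (i+1) := hDii (i+1)
                have d4 : D (i+1) (i+1+1) = p (i+1) + p (i+2) - 1 := hDis (i+1)
                have := hp1 i; have := hp1 (i+1); have := hp1 (i+2)
                omega), zero_smul]
          · by_cases c3 : i + 2 = h
            · -- u i default, u (i+1) modified (first branch)
              have e_ui : u i = (γ i (i+1)).2 := by
                simp only [hu_def]; rw [if_neg c1, if_neg c2]
              have e_ui1 : u (i+1) = ((-1:ℝ)^(p h)) • ((γ (i+1) (i+1)).1 * ξ) := by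
                simp only [hu_def]; rw [if_pos (by omega : (i+1) + 1 = h)]
              have ha2 : (γ (i+2) (i+2)).1 = ω * ξ := by rw [c3]; exact hωξ.symm
              have hb := hbω i hi1 (by omega)
              have hpa : p (i+2) = p h := by rw [c3]
              have T1 : (γ i i).1 * u (i+1) =
                  ((-1:ℝ)^(p h)) • ((γ i i).1 * ((γ (i+1) (i+1)).1 * ξ)) := by
                rw [e_ui1, mul_smul_comm]
              have T2 : u i * ε ((γ (i+2) (i+2)).1) =
                  ((-1:ℝ)^(p (i+2) + (D i (i+1) - 1 + D i i))) •
                    ((γ i i).1 * ((γ (i+1) (i+1)).1 * ξ)) := by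
                rw [e_ui, hεa2, mul_smul_comm, ha2, ← mul_assoc, hb, smul_mul_assoc,
                  smul_smul, ← pow_add, mul_assoc]
              rw [T1, T2, smul_smul, smul_smul, ← pow_add, ← pow_add, ← add_smul,
                s2_pow_add _ _ (by
                  have d1 := hDii i; have d2 := hDis i
                  have := hp1 i; have := hp1 (i+1); have := hp1 (i+2)
                  omega), zero_smul]
            · -- both default
              have e_ui : u i = (γ i (i+1)).2 := by
                simp only [hu_def]; rw [if_neg c1, if_neg c2]
              have e_ui1 : u (i+1) = (γ (i+1) (i+2)).2 := by
                simp only [hu_def]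
                rw [if_neg (by omega), if_neg c1]
              rw [e_ui, e_ui1]
              have h := hsnd2 i hi1 hi2
              rw [huniq i hi1 (by omega) c2, huniq (i+2) (by omega) hi2 c3] at h
              simpa [zero_mul, mul_zero, add_zero, zero_add] using h.symm
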